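/- Let V be a nonempty finite type, v*, v† ∈ V, and α > 1 a real number. Let D₁ be a divergence on S(V) and D₂ a divergence on S(V × V). Fix J ∈ S(V × V) and M₁, M₂ ∈ S(V) with M₁(v*) > 0, M₂(v†) > 0, and the abductive factorization J(v*, v†) = α · M₁(v*) · M₂(v†). Then there exists ε₀ > 0 such that for all F_J ∈ S(V × V) and F₁, F₂ ∈ S(V) satisfying D₂ F_J J ≤ ε₀, D₁ F₁ M₁ ≤ ε₀, D₁ F₂ M₂ ≤ ε₀, F₁(v*) > 0, and the marginal condition ∑ u ∈ V, F_J(v*, u) = F₁(v*), one has F_J(v*, v†)/F₁(v*) > F₂(v†). -/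

import Mathlib

open scoped BigOperators

/-- A divergence on the probability simplex `stdSimplex ℝ W`: continuous (in the
subspace topology on the simplex), nonnegative, and vanishing exactly on the diagonal. -/
def IsDivergence {W : Type*} [Fintype W] (D : (W → ℝ) → (W → ℝ) → ℝ) : Prop :=
  ContinuousOn (fun pq : (W → ℝ) × (W → ℝ) => D pq.1 pq.2)
      (stdSimplex ℝ W ×ˢ stdSimplex ℝ W) ∧
    (∀ p ∈ stdSimplex ℝ W, ∀ q ∈ stdSimplex ℝ W, 0 ≤ D p q) ∧
    (∀ p ∈ stdSimplex ℝ W, ∀ q ∈ stdSimplex ℝ W, (D p q = 0 ↔ p = q))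


private lemma div_close {W : Type*} [Fintype W]
    (D : (W → ℝ) → (W → ℝ) → ℝ) (hD : IsDivergence D)
    (q : W → ℝ) (hq : q ∈ stdSimplex ℝ W) (δ : ℝ) (hδ : 0 < δ) :
    ∃ ε > 0, ∀ p ∈ stdSimplex ℝ W, D p q ≤ ε → dist p q < δ := by
  classical
  set K : Set (W → ℝ) := stdSimplex ℝ W ∩ {p | δ ≤ dist p q} with hK
  have hKc : IsCompact K := by
    apply (isCompact_stdSimplex ℝ W).inter_right
    exact isClosed_le continuous_const (continuous_id.dist continuous_const)
  by_cases hne : K.Nonempty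
  · have hcont : ContinuousOn (fun p => D p q) K := by
      have : ContinuousOn (fun p : W → ℝ => D (p, q).1 (p, q).2) K := by
        apply hD.1.comp (continuousOn_id.prodMk continuousOn_const)
        intro p hp
        exact Set.mk_mem_prod hp.1 hq
      exact this
    obtain ⟨p₀, hp₀K, hmin⟩ := hKc.exists_isMinOn hne hcont
    have hp₀ne : p₀ ≠ q := by
      intro h
      have := hp₀K.2
      simp [h] at this
      linarith
    have hpos : 0 < D p₀ q := by
      rcases lt_or_eq_of_le (hD.2.1 p₀ hp₀K.1 q hq) with h | h
      · exact h
      · exact absurd ((hD.2.2 p₀ hp₀K.1 q hq).mp h.symm) hp₀ne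
    refine ⟨D p₀ q / 2, by linarith, ?_⟩
    intro p hp hle
    by_contra hcon
    push_neg at hcon
    have hpK : p ∈ K := ⟨hp, hcon⟩
    have := hmin hpK
    simp only [Set.mem_setOf_eq] at this
    linarith [this]
  · refine ⟨1, one_pos, ?_⟩
    intro p hp _
    by_contra hcon
    push_neg at hcon
    exact hne ⟨p, hp, hcon⟩

private lemma simplex_le_one {W : Type*} [Fintype W] {p : W → ℝ}
    (hp : p ∈ stdSimplex ℝ W) (w : W) : p w ≤ 1 := by
  calc p w ≤ ∑ x, p x := Finset.single_le_sum (fun x _ => hp.1 x) (Finset.mem_univ w)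
  _ = 1 := hp.2

/-- **Abduction proposition for an embedded scientist.**
If the universe's limit response distributions satisfy the abductive factorization
`J(v*, v†) = α · M₁(v*) · M₂(v†)` with `α > 1`, then there is `ε₀ > 0` such that
any scientist prediction distributions `F_J, F₁, F₂` within divergence `ε₀` of
`J, M₁, M₂` and satisfying the marginal condition obey the abduction implication:
`F_J(v*, v†)/F₁(v*) > F₂(v†)`. -/
theorem abduction_science
    {V : Type*} [Fintype V] [Nonempty V]
    (vstar vdag : V) (α : ℝ) (hα : 1 < α)
    (D₁ : (V → ℝ) → (V → ℝ) → ℝ) (hD₁ : IsDivergence D₁)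
    (D₂ : (V × V → ℝ) → (V × V → ℝ) → ℝ) (hD₂ : IsDivergence D₂)
    (J : V × V → ℝ) (hJ : J ∈ stdSimplex ℝ (V × V))
    (M₁ M₂ : V → ℝ) (hM₁ : M₁ ∈ stdSimplex ℝ V) (hM₂ : M₂ ∈ stdSimplex ℝ V)
    (hM₁pos : 0 < M₁ vstar) (hM₂pos : 0 < M₂ vdag)
    (hfact : J (vstar, vdag) = α * M₁ vstar * M₂ vdag) :
    ∃ ε₀ : ℝ, 0 < ε₀ ∧
      ∀ FJ ∈ stdSimplex ℝ (V × V), ∀ F₁ ∈ stdSimplex ℝ V, ∀ F₂ ∈ stdSimplex ℝ V,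
        D₂ FJ J ≤ ε₀ → D₁ F₁ M₁ ≤ ε₀ → D₁ F₂ M₂ ≤ ε₀ →
        0 < F₁ vstar → (∑ u : V, FJ (vstar, u)) = F₁ vstar →
        F₂ vdag < FJ (vstar, vdag) / F₁ vstar := by
  classical
  set c : ℝ := (α - 1) * M₁ vstar * M₂ vdag with hc
  have hcpos : 0 < c := by
    apply mul_pos (mul_pos (by linarith) hM₁pos) hM₂pos
  set δ : ℝ := min 1 (c / 5) with hδdef
  have hδpos : 0 < δ := lt_min one_pos (by linarith)
  have hδ1 : δ ≤ 1 := min_le_left _ _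
  have hδc : δ ≤ c / 5 := min_le_right _ _
  obtain ⟨ε₂, hε₂pos, hε₂⟩ := div_close D₂ hD₂ J hJ δ hδpos
  obtain ⟨ε₁, hε₁pos, hε₁⟩ := div_close D₁ hD₁ M₁ hM₁ δ hδpos
  obtain ⟨ε₃, hε₃pos, hε₃⟩ := div_close D₁ hD₁ M₂ hM₂ δ hδpos
  refine ⟨min ε₂ (min ε₁ ε₃), lt_min hε₂pos (lt_min hε₁pos hε₃pos), ?_⟩
  intro FJ hFJ F₁ hF₁ F₂ hF₂ hd₂ hd₁ hd₃ hF₁pos _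
  have hJd : dist FJ J < δ := hε₂ FJ hFJ (hd₂.trans (min_le_left _ _))
  have h₁d : dist F₁ M₁ < δ := hε₁ F₁ hF₁ (hd₁.trans ((min_le_right _ _).trans (min_le_left _ _)))
  have h₂d : dist F₂ M₂ < δ := hε₃ F₂ hF₂ (hd₃.trans ((min_le_right _ _).trans (min_le_right _ _)))
  have hJb : |FJ (vstar, vdag) - J (vstar, vdag)| < δ :=
    lt_of_le_of_lt (by simpa [Real.dist_eq] using dist_le_pi_dist FJ J (vstar, vdag)) hJd
  have h₁b : |F₁ vstar - M₁ vstar| < δ :=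
    lt_of_le_of_lt (by simpa [Real.dist_eq] using dist_le_pi_dist F₁ M₁ vstar) h₁d
  have h₂b : |F₂ vdag - M₂ vdag| < δ :=
    lt_of_le_of_lt (by simpa [Real.dist_eq] using dist_le_pi_dist F₂ M₂ vdag) h₂d
  rw [abs_lt] at hJb h₁b h₂b
  have hM1le : M₁ vstar ≤ 1 := simplex_le_one hM₁ vstar
  have hM2le : M₂ vdag ≤ 1 := simplex_le_one hM₂ vdag
  rw [lt_div_iff₀ hF₁pos]
  nlinarith [hJb.1, h₁b.2, h₂b.2, hF₁.1 vstar, hF₂.1 vdag, mul_pos hM₁pos hM₂pos,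
    sq_nonneg δ, mul_le_one₀ hM1le (le_of_lt hM₂pos) hM2le]
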